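/- arXiv:1602.01500 — 2 statements merged into one kernel-verified Lean document; each statement's English description precedes it below -/
import Mathlib

section
/- For 0 < q < 1, α, β > 0, 0 ≤ qx ≤ u, the q-beta-type integral identity ∫_{qx}^u t^{α-1}(qx/t;q)_{α-1}(qt/u;q)_{β-1} d_q t = u^α B_q(α,β) (qx/u;q)_{α+β-1} holds, where B_q is the q-beta function. -/
open Filter

noncomputable section

namespace QFrac

variable (q : ℝ)

/-- infinite q-shifted factorial `(z;q)_∞` -/
def pochInf (z : ℝ) : ℝ := ∏' n : ℕ, (1 - z * q ^ n)

/-- generalized q-shifted factorial `(z;q)_ν = (z;q)_∞ / (z q^ν;q)_∞` -/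
def poch (z ν : ℝ) : ℝ := pochInf q z / pochInf q (z * q ^ ν)

/-- finite q-shifted factorial `(z;q)_k` -/
def pochN (z : ℝ) (k : ℕ) : ℝ := ∏ i ∈ Finset.range k, (1 - z * q ^ i)

/-- q-Gamma function -/
def qGamma (α : ℝ) : ℝ := pochInf q q / pochInf q (q ^ α) * (1 - q) ^ (1 - α)

/-- Jackson q-integral `∫_0^a f(t) d_q t` -/
def jackson (a : ℝ) (f : ℝ → ℝ) : ℝ := (1 - q) * a * ∑' n : ℕ, q ^ n * f (a * q ^ n)

/-- Jackson q-integral `∫_c^b f(t) d_q t` -/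
def jacksonI (c b : ℝ) (f : ℝ → ℝ) : ℝ := jackson q b f - jackson q c f

/-- left-sided Riemann–Liouville q-fractional integral `I^α_{q,0^+}` -/
def Ileft (α : ℝ) (f : ℝ → ℝ) (x : ℝ) : ℝ :=
  x ^ (α - 1) / qGamma q α * jackson q x (fun t => poch q (q * t / x) (α - 1) * f t)

/-- right-sided Riemann–Liouville q-fractional integral `I^α_{q,b^-}` -/
def Iright (b α : ℝ) (f : ℝ → ℝ) (x : ℝ) : ℝ :=
  (qGamma q α)⁻¹ *
    jacksonI q (q * x) b (fun t => t ^ (α - 1) * poch q (q * x / t) (α - 1) * f t)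

/-- Jackson q-derivative -/
def Dq (f : ℝ → ℝ) (x : ℝ) : ℝ := (f x - f (q * x)) / ((1 - q) * x)

/-- Jackson `q⁻¹`-derivative -/
def Dqinv (f : ℝ → ℝ) (x : ℝ) : ℝ := (f x - f (x / q)) / ((1 - q⁻¹) * x)

/-- left-sided Caputo q-fractional derivative of order `α ∈ (0,1)` -/
def CDleft (α : ℝ) (f : ℝ → ℝ) : ℝ → ℝ := Ileft q (1 - α) (Dq q f)

/-- left-sided Riemann–Liouville q-fractional derivative of order `α ∈ (0,1)` -/
def DRLleft (α : ℝ) (f : ℝ → ℝ) : ℝ → ℝ := Dq q (Ileft q (1 - α) f)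

/-- right-sided Riemann–Liouville q-fractional derivative of order `α ∈ (0,1)` -/
def DRLright (b α : ℝ) (f : ℝ → ℝ) (x : ℝ) : ℝ :=
  (-1 / q) * Dqinv q (fun t => Iright q b (1 - α) f t) x

/-- right-sided Caputo q-fractional derivative of order `α ∈ (0,1)` -/
def CDright (b α : ℝ) (f : ℝ → ℝ) (x : ℝ) : ℝ :=
  (-1 / q) * Iright q b (1 - α) (Dqinv q f) x

/-- `f ∈ L¹_q(A^*_{q,a})` -/
def MemL1 (a : ℝ) (f : ℝ → ℝ) : Prop := Summable (fun n : ℕ => q ^ n * |f (a * q ^ n)|)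

/-- `f ∈ L²_q(A^*_{q,a})` -/
def MemL2 (a : ℝ) (f : ℝ → ℝ) : Prop := Summable (fun n : ℕ => q ^ n * (f (a * q ^ n)) ^ 2)

/-- the `L²_q` norm -/
def norm2 (a : ℝ) (f : ℝ → ℝ) : ℝ := Real.sqrt (jackson q a (fun t => (f t) ^ 2))

/-- `f` is q-regular at zero (its value at `0` is the limit along the q-grid) -/
def qRegular (a : ℝ) (f : ℝ → ℝ) : Prop :=
  Tendsto (fun n : ℕ => f (a * q ^ n)) atTop (nhds (f 0))

/-- the limit at zero along the q-grid exists -/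
def qRegular' (a : ℝ) (f : ℝ → ℝ) : Prop :=
  ∃ L : ℝ, Tendsto (fun n : ℕ => f (a * q ^ n)) atTop (nhds L)

/-- sup norm on `A^*_{q,a}` -/
def supNorm (a : ℝ) (f : ℝ → ℝ) : ℝ := max (⨆ n : ℕ, |f (a * q ^ n)|) |f 0|

/-- bounded q-variation part of q-absolute continuity -/
def qACvar (a : ℝ) (f : ℝ → ℝ) : Prop :=
  ∃ K : ℝ, ∀ m N : ℕ,
    ∑ j ∈ Finset.range N, |f (a * q ^ (m + j)) - f (a * q ^ (m + j + 1))| ≤ K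

/-- q-absolute continuity on `A^*_{q,a}` -/
def qAC (a : ℝ) (f : ℝ → ℝ) : Prop := qRegular q a f ∧ qACvar q a f

/-- little q-Jacobi polynomial `p_n(x; q^A, q^B | q)` -/
def littleJacobi (n : ℕ) (A B x : ℝ) : ℝ :=
  ∑ k ∈ Finset.range (n + 1),
    pochN q (q ^ (-(n : ℝ))) k * pochN q (q ^ (A + B + (n : ℝ) + 1)) k /
      (pochN q (q ^ (A + 1)) k * pochN q q k) * (q * x) ^ k

end QFrac

namespace QAux
open QFrac Finset

variable {q : ℝ}

lemma pochN_succ (z : ℝ) (m : ℕ) :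
    pochN q z (m + 1) = pochN q z m * (1 - z * q ^ m) := Finset.prod_range_succ _ _

lemma pochN_pos (hq : 0 < q) (hq1 : q < 1) {z : ℝ} (hz0 : 0 ≤ z) (hz1 : z < 1) (m : ℕ) :
    0 < pochN q z m := by
  refine Finset.prod_pos fun i _ => ?_
  have h1 : q ^ i ≤ 1 := pow_le_one₀ hq.le hq1.le
  have h2 : 0 ≤ q ^ i := pow_nonneg hq.le i
  nlinarith

lemma summable_log (hq : 0 < q) (hq1 : q < 1) {z : ℝ} (hz0 : 0 ≤ z) (hz1 : z < 1) :
    Summable fun n : ℕ => Real.log (1 - z * q ^ n) := by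
  refine Summable.of_abs ?_
  have hb : Summable fun n : ℕ => z / (1 - z) * q ^ n :=
    (summable_geometric_of_lt_one hq.le hq1).mul_left _
  refine hb.of_nonneg_of_le (fun n => abs_nonneg _) fun n => ?_
  have h1 : z * q ^ n ≤ z := mul_le_of_le_one_right hz0 (pow_le_one₀ hq.le hq1.le)
  have h2 : 0 ≤ z * q ^ n := mul_nonneg hz0 (pow_nonneg hq.le n)
  have h3 : 0 < 1 - z * q ^ n := by linarith
  have h4 : Real.log (1 - z * q ^ n) ≤ 0 := Real.log_nonpos (by linarith) (by linarith)
  rw [abs_of_nonpos h4, ← Real.log_inv]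
  have h6 : Real.log (1 - z * q ^ n)⁻¹ ≤ (1 - z * q ^ n)⁻¹ - 1 :=
    Real.log_le_sub_one_of_pos (inv_pos.2 h3)
  have h7 : (1 - z * q ^ n)⁻¹ - 1 = z * q ^ n / (1 - z * q ^ n) := by field_simp; ring
  have h8 : z * q ^ n / (1 - z * q ^ n) ≤ z * q ^ n / (1 - z) :=
    div_le_div_of_nonneg_left h2 (by linarith) (by linarith)
  have h9 : z * q ^ n / (1 - z) = z / (1 - z) * q ^ n := by ring
  linarith [h6, h8]

lemma multipliable_poch (hq : 0 < q) (hq1 : q < 1) {z : ℝ} (hz0 : 0 ≤ z) (hz1 : z < 1) :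
    Multipliable fun n : ℕ => 1 - z * q ^ n := by
  have h1 : z * q ^ (0:ℕ) ≤ z := mul_le_of_le_one_right hz0 (pow_le_one₀ hq.le hq1.le)
  exact Real.multipliable_of_summable_log (f := fun n => 1 - z * q ^ n)
    (fun n => by
      have h1 : q ^ n ≤ 1 := pow_le_one₀ hq.le hq1.le
      have h2 : 0 ≤ q ^ n := pow_nonneg hq.le n
      show (0:ℝ) < 1 - z * q ^ n
      nlinarith)
    (summable_log hq hq1 hz0 hz1)

lemma pochInf_pos (hq : 0 < q) (hq1 : q < 1) {z : ℝ} (hz0 : 0 ≤ z) (hz1 : z < 1) :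
    0 < pochInf q z := by
  have h := Real.rexp_tsum_eq_tprod (f := fun n => 1 - z * q ^ n)
    (fun n => by
      have h1 : q ^ n ≤ 1 := pow_le_one₀ hq.le hq1.le
      have h2 : 0 ≤ q ^ n := pow_nonneg hq.le n
      show (0:ℝ) < 1 - z * q ^ n
      nlinarith)
    (summable_log hq hq1 hz0 hz1)
  have h2 : Real.exp (∑' n : ℕ, Real.log (1 - z * q ^ n)) = ∏' n : ℕ, (1 - z * q ^ n) := h
  rw [pochInf, ← h2]
  exact Real.exp_pos _

lemma pochInf_split (hq : 0 < q) (hq1 : q < 1) {z : ℝ} (hz0 : 0 ≤ z) (hz1 : z < 1) (m : ℕ) :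
    pochInf q z = pochN q z m * pochInf q (z * q ^ m) := by
  have hzm0 : 0 ≤ z * q ^ m := mul_nonneg hz0 (pow_nonneg hq.le m)
  have hzm1 : z * q ^ m < 1 :=
    lt_of_le_of_lt (mul_le_of_le_one_right hz0 (pow_le_one₀ hq.le hq1.le)) hz1
  have hm : Multipliable fun n : ℕ => 1 - z * q ^ m * q ^ n := multipliable_poch hq hq1 hzm0 hzm1
  have hm' : Multipliable fun n : ℕ => 1 - z * q ^ (n + m) :=
    hm.congr fun n => by rw [pow_add]; ring
  have key := Multipliable.prod_mul_tprod_nat_mul' (f := fun n => 1 - z * q ^ n) (k := m) hm'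
  rw [pochInf, ← key, pochN]
  congr 1
  rw [pochInf]
  exact tprod_congr fun n => by simp only [pow_add]; ring

lemma pochInf_tail (hq : 0 < q) (hq1 : q < 1) {z : ℝ} (hz0 : 0 ≤ z) (hz1 : z < 1) (m : ℕ) :
    pochInf q (z * q ^ m) = pochInf q z / pochN q z m := by
  rw [eq_div_iff (pochN_pos hq hq1 hz0 hz1 m).ne']
  rw [pochInf_split hq hq1 hz0 hz1 m]; ring

lemma pochInf_eq_zero (j : ℕ) {z : ℝ} (hj : z * q ^ j = 1) : pochInf q z = 0 := by
  have h : HasProd (fun n : ℕ => 1 - z * q ^ n) 0 := by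
    rw [HasProd]
    have hev : ∀ᶠ s : Finset ℕ in atTop, (∏ i ∈ s, (1 - z * q ^ i)) = 0 := by
      filter_upwards [eventually_ge_atTop ({j} : Finset ℕ)] with s hs
      exact Finset.prod_eq_zero (hs (Finset.mem_singleton_self j)) (by rw [hj]; ring)
    exact Tendsto.congr' (by filter_upwards [hev] with s hs; exact hs.symm) tendsto_const_nhds
  exact h.tprod_eq


def qb (q : ℝ) (k n : ℕ) : ℝ :=
  if n ≤ k then pochN q q k / (pochN q q n * pochN q q (k - n)) else 0

variable {q : ℝ}

lemma qq_ne (hq : 0 < q) (hq1 : q < 1) (m : ℕ) : pochN q q m ≠ 0 :=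
  (pochN_pos hq hq1 hq.le hq1 m).ne'

lemma qb_zero (hq : 0 < q) (hq1 : q < 1) (k : ℕ) : qb q k 0 = 1 := by
  rw [qb, if_pos (Nat.zero_le k)]
  simp [pochN]
  exact qq_ne hq hq1 k

lemma qb_self (hq : 0 < q) (hq1 : q < 1) (k : ℕ) : qb q k k = 1 := by
  rw [qb, if_pos le_rfl, Nat.sub_self]
  have : pochN q q 0 = 1 := by simp [pochN]
  rw [this, mul_one]
  exact div_self (qq_ne hq hq1 k)

lemma qb_pascal (hq : 0 < q) (hq1 : q < 1) {k n : ℕ} (hn : n ≤ k) :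
    qb q (k + 1) (n + 1) = qb q k (n + 1) + q ^ (k - n) * qb q k n := by
  rcases eq_or_lt_of_le hn with rfl | hlt
  · rw [qb_self hq hq1, qb_self hq hq1, Nat.sub_self, pow_zero, one_mul]
    rw [qb, if_neg (by omega)]
    ring
  · obtain ⟨m, rfl⟩ := Nat.exists_eq_add_of_lt hlt
    have e1 : n + m + 1 - n = m + 1 := by omega
    have e2 : n + m + 1 - (n + 1) = m := by omega
    have e3 : n + m + 1 + 1 - (n + 1) = m + 1 := by omega
    rw [qb, qb, qb, if_pos (by omega), if_pos (by omega), if_pos (by omega), e1, e2, e3]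
    rw [show n + m + 1 + 1 = (n + m + 1) + 1 from rfl, pochN_succ,
      pochN_succ (z := q) (m := n) (q := q), pochN_succ (z := q) (m := m) (q := q)]
    have h1 := qq_ne hq hq1 n
    have h2 := qq_ne hq hq1 m
    have h3 := qq_ne hq hq1 (n + m + 1)
    have h4 : (1 : ℝ) - q * q ^ n ≠ 0 := by
      have := pochN_pos hq hq1 hq.le hq1 (n + 1)
      rw [pochN_succ] at this
      intro h; rw [h, mul_zero] at this; exact lt_irrefl 0 this
    have h5 : (1 : ℝ) - q * q ^ m ≠ 0 := by
      have := pochN_pos hq hq1 hq.le hq1 (m + 1)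
      rw [pochN_succ] at this
      intro h; rw [h, mul_zero] at this; exact lt_irrefl 0 this
    field_simp
    ring

lemma qvdm_poly (hq : 0 < q) (hq1 : q < 1) (a b : ℝ) (k : ℕ) :
    ∑ n ∈ Finset.range (k + 1), qb q k n * a ^ n * pochN q b n * pochN q a (k - n)
      = pochN q (a * b) k := by
  induction k with
  | zero => simp [qb, pochN]
  | succ k ih =>
    set G : ℕ → ℝ := fun n => qb q k n * a ^ n * pochN q b n * pochN q a (k - n) with hGdef
    have hGn : ∀ n, G n = qb q k n * a ^ n * pochN q b n * pochN q a (k - n) := fun _ => rfl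
    rw [Finset.sum_range_succ']
    have hstep1 : ∑ n ∈ Finset.range (k + 1),
        qb q (k + 1) (n + 1) * a ^ (n + 1) * pochN q b (n + 1) * pochN q a (k + 1 - (n + 1))
        = (∑ n ∈ Finset.range (k + 1),
            qb q k (n + 1) * a ^ (n + 1) * pochN q b (n + 1) * pochN q a (k - n))
          + ((∑ n ∈ Finset.range (k + 1), G n * (a * q ^ (k - n)))
             - ∑ n ∈ Finset.range (k + 1), G n * (a * b * q ^ k)) := by
      rw [← Finset.sum_sub_distrib, ← Finset.sum_add_distrib]
      refine Finset.sum_congr rfl fun n hn => ?_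
      have hnk : n ≤ k := Nat.lt_succ_iff.mp (Finset.mem_range.mp hn)
      have e : k + 1 - (n + 1) = k - n := by omega
      have epow : q ^ (k - n) * q ^ n = q ^ k := by rw [← pow_add]; congr 1; omega
      rw [e, qb_pascal hq hq1 hnk, pochN_succ (z := b) (m := n) (q := q), hGn]
      linear_combination (-(qb q k n * a ^ n * pochN q b n * pochN q a (k - n) * a * b)) * epow
    rw [hstep1, add_right_comm]
    have hstep2 : (∑ n ∈ Finset.range (k + 1),
          qb q k (n + 1) * a ^ (n + 1) * pochN q b (n + 1) * pochN q a (k - n))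
        + qb q (k + 1) 0 * a ^ 0 * pochN q b 0 * pochN q a (k + 1 - 0)
        = ∑ n ∈ Finset.range (k + 1), (G n - G n * (a * q ^ (k - n))) := by
      have hh : ∀ n ∈ Finset.range (k + 1),
          qb q k (n + 1) * a ^ (n + 1) * pochN q b (n + 1) * pochN q a (k - n)
          = qb q k (n + 1) * a ^ (n + 1) * pochN q b (n + 1) * pochN q a (k + 1 - (n + 1)) := by
        intro n _; congr 2; omega
      rw [Finset.sum_congr rfl hh]
      have h0 : qb q (k + 1) 0 * a ^ 0 * pochN q b 0 * pochN q a (k + 1 - 0)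
          = qb q k 0 * a ^ 0 * pochN q b 0 * pochN q a (k + 1 - 0) := by
        rw [qb_zero hq hq1, qb_zero hq hq1]
      rw [h0, ← Finset.sum_range_succ'
        (fun n => qb q k n * a ^ n * pochN q b n * pochN q a (k + 1 - n)) (k + 1),
        Finset.sum_range_succ]
      have hlast : qb q k (k + 1) * a ^ (k + 1) * pochN q b (k + 1)
          * pochN q a (k + 1 - (k + 1)) = 0 := by
        rw [qb, if_neg (by omega)]; ring
      rw [hlast, add_zero]
      refine Finset.sum_congr rfl fun n hn => ?_
      have hnk : n ≤ k := Nat.lt_succ_iff.mp (Finset.mem_range.mp hn)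
      have e : k + 1 - n = (k - n) + 1 := by omega
      rw [e, pochN_succ (z := a) (m := k - n) (q := q), hGn]
      ring
    rw [hstep2, Finset.sum_sub_distrib, ← Finset.sum_mul, ih,
      pochN_succ (z := a * b) (m := k) (q := q)]
    ring

lemma qvdm (hq : 0 < q) (hq1 : q < 1) (a b : ℝ) (k : ℕ) :
    ∑ n ∈ Finset.range (k + 1),
        a ^ n * pochN q b n * pochN q a (k - n) / (pochN q q n * pochN q q (k - n))
      = pochN q (a * b) k / pochN q q k := by
  rw [eq_div_iff (qq_ne hq hq1 k), Finset.sum_mul, ← qvdm_poly hq hq1 a b k]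
  refine Finset.sum_congr rfl fun n hn => ?_
  have hnk : n ≤ k := Nat.lt_succ_iff.mp (Finset.mem_range.mp hn)
  have h1 := qq_ne hq hq1 n
  have h2 := qq_ne hq hq1 (k - n)
  rw [qb, if_pos hnk]
  field_simp

lemma poch_pow (hq : 0 < q) (hq1 : q < 1) {c : ℝ} (hc0 : 0 ≤ c) (hc1 : c < 1) (m : ℕ)
    {ν : ℝ} (hν : ((q : ℝ) ^ (m + 1)) * q ^ ν = c * q ^ m) :
    poch q (q ^ (m + 1)) ν
      = (pochInf q q / pochN q q m) / (pochInf q c / pochN q c m) := by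
  rw [poch, hν, show (q : ℝ) ^ (m + 1) = q * q ^ m by ring,
    pochInf_tail hq hq1 hq.le hq1 m, pochInf_tail hq hq1 hc0 hc1 m]

end QAux

open QAux

/-- q-beta-type integral identity. -/
theorem stmt3 (q α β u x : ℝ) (hq : 0 < q) (hq1 : q < 1) (hα : 0 < α) (hβ : 0 < β)
    (hu : 0 < u) (k : ℕ) (hx : x = u * q ^ k) :
    QFrac.jacksonI q (q * x) u
        (fun t => t ^ (α - 1) * QFrac.poch q (q * x / t) (α - 1) *
          QFrac.poch q (q * t / u) (β - 1)) =
      u ^ α * (QFrac.qGamma q α * QFrac.qGamma q β / QFrac.qGamma q (α + β)) *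
        QFrac.poch q (q * x / u) (α + β - 1) := by
  subst hx
  have hu' : u ≠ 0 := hu.ne'
  have hq' : q ≠ 0 := hq.ne'
  have hw : (0 : ℝ) < 1 - q := by linarith
  set F : ℝ → ℝ := fun t => t ^ (α - 1) * QFrac.poch q (q * (u * q ^ k) / t) (α - 1) *
    QFrac.poch q (q * t / u) (β - 1) with hF
  have hFval : ∀ t : ℝ, F t = t ^ (α - 1) * QFrac.poch q (q * (u * q ^ k) / t) (α - 1) *
      QFrac.poch q (q * t / u) (β - 1) := fun t => rfl
  have hFzero : ∀ t : ℝ, (∃ j : ℕ, (q * (u * q ^ k) / t) * q ^ j = 1) → F t = 0 := by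
    rintro t ⟨j, hj⟩
    rw [hFval, QFrac.poch, pochInf_eq_zero j hj, zero_div, mul_zero, zero_mul]
  simp only [QFrac.jacksonI, QFrac.jackson, QFrac.qGamma]
  have hlow : (∑' n : ℕ, q ^ n * F (q * (u * q ^ k) * q ^ n)) = 0 := by
    have hz : ∀ n : ℕ, q ^ n * F (q * (u * q ^ k) * q ^ n) = 0 := by
      intro n
      rw [hFzero _ ⟨n, by field_simp⟩, mul_zero]
    rw [funext hz, tsum_zero]
  have hupzero : ∀ n : ℕ, n ∉ Finset.range (k + 2) → q ^ n * F (u * q ^ n) = 0 := by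
    intro n hn
    rw [Finset.mem_range, not_lt] at hn
    obtain ⟨j, rfl⟩ : ∃ j, n = k + 1 + (j + 1) := ⟨n - (k + 2), by omega⟩
    refine mul_eq_zero_of_right _ (hFzero _ ⟨j + 1, ?_⟩)
    rw [pow_add]
    field_simp
    ring
  have hup : (∑' n : ℕ, q ^ n * F (u * q ^ n))
      = ∑ n ∈ Finset.range (k + 1), q ^ n * F (u * q ^ n) := by
    rw [tsum_eq_sum hupzero, Finset.sum_range_succ]
    have hlast : F (u * q ^ (k + 1)) = 0 :=
      hFzero _ ⟨0, by rw [pow_succ, pow_zero]; field_simp⟩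
    rw [hlast, mul_zero, add_zero]
  rw [hup, hlow, mul_zero, sub_zero]
  set a := q ^ α with ha
  set b := q ^ β with hb
  have ha0 : 0 < a := Real.rpow_pos_of_pos hq α
  have ha1 : a < 1 := Real.rpow_lt_one hq.le hq1 hα
  have hb0 : 0 < b := Real.rpow_pos_of_pos hq β
  have hb1 : b < 1 := Real.rpow_lt_one hq.le hq1 hβ
  have hab : q ^ (α + β) = a * b := by rw [ha, hb, ← Real.rpow_add hq]
  have hab0 : 0 < a * b := mul_pos ha0 hb0
  have hab1 : a * b < 1 := by nlinarith
  have hPq := pochInf_pos hq hq1 hq.le hq1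
  have hPa := pochInf_pos hq hq1 ha0.le ha1
  have hPb := pochInf_pos hq hq1 hb0.le hb1
  have hPab := pochInf_pos hq hq1 hab0.le hab1
  -- termwise evaluation of the sum
  have hterm : ∀ n ∈ Finset.range (k + 1), q ^ n * F (u * q ^ n)
      = (u ^ (α - 1) * (QFrac.pochInf q q) ^ 2 / (QFrac.pochInf q a * QFrac.pochInf q b))
        * (a ^ n * QFrac.pochN q b n * QFrac.pochN q a (k - n)
            / (QFrac.pochN q q n * QFrac.pochN q q (k - n))) := by
    intro n hn
    have hnk : n ≤ k := Nat.lt_succ_iff.mp (Finset.mem_range.mp hn)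
    obtain ⟨m, hm⟩ := Nat.le.dest hnk
    have hkn : k - n = m := by omega
    rw [hkn, hFval]
    have harg1 : q * (u * q ^ k) / (u * q ^ n) = q ^ (m + 1) := by
      rw [← hm, pow_add]; field_simp; ring
    have harg2 : q * (u * q ^ n) / u = q ^ (n + 1) := by field_simp; ring
    rw [harg1, harg2]
    have hqa : ((q : ℝ) ^ (m + 1)) * q ^ (α - 1) = a * q ^ m := by
      rw [ha, Real.rpow_sub hq, Real.rpow_one]; field_simp; ring
    have hqb : ((q : ℝ) ^ (n + 1)) * q ^ (β - 1) = b * q ^ n := by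
      rw [hb, Real.rpow_sub hq, Real.rpow_one]; field_simp; ring
    rw [poch_pow hq hq1 ha0.le ha1 m hqa, poch_pow hq hq1 hb0.le hb1 n hqb]
    have ht1 : (u * q ^ n : ℝ) ^ (α - 1) = u ^ (α - 1) * ((q : ℝ) ^ n) ^ (α - 1) :=
      Real.mul_rpow hu.le (pow_nonneg hq.le n)
    have ht2 : ((q : ℝ) ^ n) ^ (α - 1) = ((q : ℝ) ^ n) ^ α / q ^ n := by
      rw [Real.rpow_sub (pow_pos hq n), Real.rpow_one]
    have ht3 : ((q : ℝ) ^ n) ^ α = a ^ n := by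
      rw [← Real.rpow_natCast q n, ← Real.rpow_mul hq.le, mul_comm ((n : ℕ) : ℝ) α,
        Real.rpow_mul hq.le, Real.rpow_natCast, ← ha]
    rw [ht1, ht2, ht3]
    have h1 : QFrac.pochN q q n ≠ 0 := qq_ne hq hq1 n
    have h2 : QFrac.pochN q q m ≠ 0 := qq_ne hq hq1 m
    have h3 : QFrac.pochN q a m ≠ 0 := (pochN_pos hq hq1 ha0.le ha1 m).ne'
    have h4 : QFrac.pochN q b n ≠ 0 := (pochN_pos hq hq1 hb0.le hb1 n).ne'
    have h5 : (q : ℝ) ^ n ≠ 0 := pow_ne_zero n hq'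
    field_simp
  rw [Finset.sum_congr rfl hterm, ← Finset.mul_sum, qvdm hq hq1 a b k]
  -- the right-hand side
  have hargr : q * (u * q ^ k) / u = q ^ (k + 1) := by field_simp; ring
  have hqab : ((q : ℝ) ^ (k + 1)) * q ^ (α + β - 1) = (a * b) * q ^ k := by
    rw [Real.rpow_sub hq, Real.rpow_one, hab]; field_simp; ring
  rw [hargr, poch_pow hq hq1 hab0.le hab1 k hqab, hab]
  -- powers of (1 - q) and of u
  have hw1 : (0 : ℝ) < (1 - q) ^ (1 - α) := Real.rpow_pos_of_pos hw _
  have hw3 : (0 : ℝ) < (1 - q) ^ (1 - (α + β)) := Real.rpow_pos_of_pos hw _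
  have hw2 : (1 - q) ^ (1 - β) = (1 - q) * (1 - q) ^ (1 - (α + β)) / (1 - q) ^ (1 - α) := by
    rw [eq_div_iff hw1.ne', ← Real.rpow_add hw]
    have h9 : (1 - q) ^ ((1 : ℝ) + (1 - (α + β))) = (1 - q) ^ (1 : ℝ) * (1 - q) ^ (1 - (α + β)) :=
      Real.rpow_add hw _ _
    rw [Real.rpow_one] at h9
    rw [← h9]
    congr 1
    ring
  have hu1 : u ^ (α - 1) = u ^ α / u := by rw [Real.rpow_sub hu, Real.rpow_one]
  rw [hw2, hu1]
  have h6 : QFrac.pochN q q k ≠ 0 := qq_ne hq hq1 k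
  have h7 : QFrac.pochN q (a * b) k ≠ 0 := (pochN_pos hq hq1 hab0.le hab1 k).ne'
  field_simp
end
end

section
/- Let α > 1/2 and f ∈ L²_q(A*_{q,a}). Then I^α_{q,0^+} f is q-regular at zero and ‖I^α_{q,0^+} f‖_∞ ≤ M̃_α ‖f‖₂, where M̃_α = (a^{α−1/2}/Γ_q(α)) (∫_0^1 (qξ;q)²_{α−1} d_q ξ)^{1/2}. -/
open Filter

noncomputable section

section StmtAux

variable {q : ℝ}

lemma aux_factor_pos (hq : 0 < q) (hq1 : q < 1) {z : ℝ} (hz0 : 0 ≤ z) (hz1 : z < 1) (n : ℕ) :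
    0 < 1 - z * q ^ n := by
  have h1 : q ^ n ≤ 1 := pow_le_one₀ hq.le hq1.le
  have h2 : z * q ^ n ≤ z := by nlinarith
  linarith

lemma aux_log_summable (hq : 0 < q) (hq1 : q < 1) {z : ℝ} (hz0 : 0 ≤ z) (hz1 : z < 1) :
    Summable fun n : ℕ => Real.log (1 - z * q ^ n) := by
  have hgeo : Summable fun n : ℕ => (z / (1 - z)) * q ^ n :=
    (summable_geometric_of_lt_one hq.le hq1).mul_left _
  apply Summable.of_norm
  refine Summable.of_nonneg_of_le (fun n => norm_nonneg _) (fun n => ?_) hgeo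
  have hp := aux_factor_pos hq hq1 hz0 hz1 n
  have hqn : 0 ≤ q ^ n := pow_nonneg hq.le n
  have hqn1 : q ^ n ≤ 1 := pow_le_one₀ hq.le hq1.le
  have hle : 1 - z ≤ 1 - z * q ^ n := by nlinarith
  have h1 : Real.log (1 - z * q ^ n) ≤ 0 := Real.log_nonpos (by linarith) (by nlinarith)
  rw [Real.norm_eq_abs, abs_of_nonpos h1]
  have h2 : Real.log ((1 - z * q ^ n)⁻¹) ≤ (1 - z * q ^ n)⁻¹ - 1 :=
    Real.log_le_sub_one_of_pos (inv_pos.mpr hp)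
  rw [Real.log_inv] at h2
  have h3 : (1 - z * q ^ n)⁻¹ - 1 = (z * q ^ n) / (1 - z * q ^ n) := by field_simp; ring
  have h4 : (z * q ^ n) / (1 - z * q ^ n) ≤ (z * q ^ n) / (1 - z) := by
    apply div_le_div_of_nonneg_left (by positivity) (by linarith) hle
  calc -Real.log (1 - z * q ^ n) ≤ (1 - z * q ^ n)⁻¹ - 1 := by linarith
    _ = (z * q ^ n) / (1 - z * q ^ n) := h3
    _ ≤ (z * q ^ n) / (1 - z) := h4
    _ = z / (1 - z) * q ^ n := by ring

lemma aux_pochInf_eq (hq : 0 < q) (hq1 : q < 1) {z : ℝ} (hz0 : 0 ≤ z) (hz1 : z < 1) :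
    QFrac.pochInf q z = Real.exp (∑' n : ℕ, Real.log (1 - z * q ^ n)) := by
  have h := Real.rexp_tsum_eq_tprod (f := fun n : ℕ => 1 - z * q ^ n)
    (fun n => aux_factor_pos hq hq1 hz0 hz1 n) (aux_log_summable hq hq1 hz0 hz1)
  have h2 := h
  simpa [QFrac.pochInf, Function.comp] using h2.symm

lemma aux_pochInf_pos (hq : 0 < q) (hq1 : q < 1) {z : ℝ} (hz0 : 0 ≤ z) (hz1 : z < 1) :
    0 < QFrac.pochInf q z := by
  rw [aux_pochInf_eq hq hq1 hz0 hz1]; exact Real.exp_pos _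

lemma aux_pochInf_le_one (hq : 0 < q) (hq1 : q < 1) {z : ℝ} (hz0 : 0 ≤ z) (hz1 : z < 1) :
    QFrac.pochInf q z ≤ 1 := by
  rw [aux_pochInf_eq hq hq1 hz0 hz1, Real.exp_le_one_iff]
  apply tsum_nonpos
  intro n
  apply Real.log_nonpos
  · nlinarith [aux_factor_pos hq hq1 hz0 hz1 n]
  · nlinarith [pow_nonneg hq.le n]

lemma aux_pochInf_anti (hq : 0 < q) (hq1 : q < 1) {z w : ℝ} (hz0 : 0 ≤ z) (hzw : z ≤ w)
    (hw1 : w < 1) : QFrac.pochInf q w ≤ QFrac.pochInf q z := by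
  have hw0 : 0 ≤ w := le_trans hz0 hzw
  have hz1 : z < 1 := lt_of_le_of_lt hzw hw1
  rw [aux_pochInf_eq hq hq1 hz0 hz1, aux_pochInf_eq hq hq1 hw0 hw1, Real.exp_le_exp]
  refine Summable.tsum_le_tsum (fun n => ?_) (aux_log_summable hq hq1 hw0 hw1)
    (aux_log_summable hq hq1 hz0 hz1)
  have h := aux_factor_pos hq hq1 hw0 hw1 n
  have hqn : 0 ≤ q ^ n := pow_nonneg hq.le n
  exact Real.log_le_log h (by nlinarith)

lemma aux_cs (u v : ℕ → ℝ) (hu : Summable fun n => u n ^ 2)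
    (hv : Summable fun n => v n ^ 2) :
    Summable (fun n => |u n * v n|) ∧
      ∑' n, |u n * v n| ≤ Real.sqrt (∑' n, u n ^ 2) * Real.sqrt (∑' n, v n ^ 2) := by
  have hA : 0 ≤ ∑' n, u n ^ 2 := tsum_nonneg fun _ => sq_nonneg _
  have hB : 0 ≤ ∑' n, v n ^ 2 := tsum_nonneg fun _ => sq_nonneg _
  have key : ∀ s : Finset ℕ, ∑ n ∈ s, |u n * v n| ≤
      Real.sqrt (∑' n, u n ^ 2) * Real.sqrt (∑' n, v n ^ 2) := by
    intro s
    have h1 : (∑ n ∈ s, |u n * v n|) ^ 2 ≤ (∑ n ∈ s, u n ^ 2) * ∑ n ∈ s, v n ^ 2 := by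
      have h := Finset.sum_mul_sq_le_sq_mul_sq s (fun n => |u n|) (fun n => |v n|)
      simpa [abs_mul, sq_abs] using h
    have h2 : (∑ n ∈ s, u n ^ 2) ≤ ∑' n, u n ^ 2 := Summable.sum_le_tsum s (fun _ _ => sq_nonneg _) hu
    have h3 : (∑ n ∈ s, v n ^ 2) ≤ ∑' n, v n ^ 2 := Summable.sum_le_tsum s (fun _ _ => sq_nonneg _) hv
    have h4 : (∑ n ∈ s, |u n * v n|) ^ 2 ≤ (∑' n, u n ^ 2) * ∑' n, v n ^ 2 :=
      h1.trans (mul_le_mul h2 h3 (Finset.sum_nonneg fun _ _ => sq_nonneg _) hA)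
    have h5 : 0 ≤ ∑ n ∈ s, |u n * v n| := Finset.sum_nonneg fun _ _ => abs_nonneg _
    calc ∑ n ∈ s, |u n * v n| = Real.sqrt ((∑ n ∈ s, |u n * v n|) ^ 2) := (Real.sqrt_sq h5).symm
      _ ≤ Real.sqrt ((∑' n, u n ^ 2) * ∑' n, v n ^ 2) := Real.sqrt_le_sqrt h4
      _ = _ := Real.sqrt_mul hA _
  have hs : Summable fun n => |u n * v n| := summable_of_sum_le (fun n => abs_nonneg _) key
  exact ⟨hs, Summable.tsum_le_of_sum_le hs key⟩

end StmtAux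

/-- for `α > 1/2`, `I^α_{q,0^+}` maps `L²_q` into `C(A^*_{q,a})`
with the bound `‖I^α f‖_∞ ≤ M̃_α ‖f‖₂`. -/
theorem stmt10 (q a α : ℝ) (hq : 0 < q) (hq1 : q < 1) (ha : 0 < a)
    (hα : 1 / 2 < α) (f : ℝ → ℝ) (hf : QFrac.MemL2 q a f) :
    QFrac.qRegular q a (QFrac.Ileft q α f) ∧
      QFrac.supNorm q a (QFrac.Ileft q α f) ≤
        (a ^ (α - 1 / 2) / QFrac.qGamma q α *
            Real.sqrt (QFrac.jackson q 1 (fun ξ => (QFrac.poch q (q * ξ) (α - 1)) ^ 2))) *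
          QFrac.norm2 q a f := by
  have hf' : Summable (fun m : ℕ => q ^ m * f (a * q ^ m) ^ 2) := hf
  have hq1' : (0:ℝ) < 1 - q := by linarith
  have hα0 : 0 < α := by linarith
  have hqα0 : 0 ≤ q ^ α := Real.rpow_nonneg hq.le α
  have hqα1 : q ^ α < 1 := Real.rpow_lt_one hq.le hq1 hα0
  have hΓpos : 0 < QFrac.qGamma q α := by
    have h1 : 0 < QFrac.pochInf q q := aux_pochInf_pos hq hq1 hq.le hq1
    have h2 : 0 < QFrac.pochInf q (q ^ α) := aux_pochInf_pos hq hq1 hqα0 hqα1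
    have h3 : 0 < (1 - q) ^ (1 - α) := Real.rpow_pos_of_pos hq1' _
    exact mul_pos (div_pos h1 h2) h3
  set P : ℕ → ℝ := fun k => QFrac.poch q (q * q ^ k) (α - 1) with hPdef
  have hz1k : ∀ k : ℕ, 0 ≤ q * q ^ k ∧ q * q ^ k < 1 := by
    intro k
    refine ⟨by positivity, ?_⟩
    have h := pow_le_one₀ hq.le hq1.le (n := k)
    nlinarith
  have hz2 : ∀ k : ℕ, (q * q ^ k) * q ^ (α - 1) = q ^ ((k : ℝ) + α) := by
    intro k
    have h1 : q * q ^ k = q ^ (((k : ℝ) + 1)) := by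
      rw [show ((k:ℝ)+1) = ((k+1 : ℕ) : ℝ) by push_cast; ring, Real.rpow_natCast]
      exact (pow_succ' q k).symm
    rw [h1, ← Real.rpow_add hq]
    congr 1; ring
  have hkα0 : ∀ k : ℕ, 0 ≤ q ^ ((k:ℝ) + α) := fun k => Real.rpow_nonneg hq.le _
  have hkα1 : ∀ k : ℕ, q ^ ((k:ℝ) + α) < 1 := fun k =>
    Real.rpow_lt_one hq.le hq1 (by positivity)
  have hkαle : ∀ k : ℕ, q ^ ((k:ℝ) + α) ≤ q ^ α := fun k =>
    Real.rpow_le_rpow_of_exponent_ge hq hq1.le (by simp [Nat.cast_nonneg])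
  have hPpos : ∀ k, 0 < P k := by
    intro k
    have h1 := aux_pochInf_pos hq hq1 (hz1k k).1 (hz1k k).2
    have h2 : 0 < QFrac.pochInf q ((q * q ^ k) * q ^ (α - 1)) := by
      rw [hz2 k]; exact aux_pochInf_pos hq hq1 (hkα0 k) (hkα1 k)
    exact div_pos h1 h2
  have hC : ∀ k, P k ≤ (QFrac.pochInf q (q ^ α))⁻¹ := by
    intro k
    have h1 : QFrac.pochInf q (q * q ^ k) ≤ 1 :=
      aux_pochInf_le_one hq hq1 (hz1k k).1 (hz1k k).2
    have h2 : QFrac.pochInf q (q ^ α) ≤ QFrac.pochInf q ((q * q ^ k) * q ^ (α - 1)) := by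
      rw [hz2 k]; exact aux_pochInf_anti hq hq1 (hkα0 k) (hkαle k) hqα1
    have h3 : 0 < QFrac.pochInf q (q ^ α) := aux_pochInf_pos hq hq1 hqα0 hqα1
    have h4 := div_le_div₀ (by norm_num) h1 h3 h2
    simpa [hPdef, QFrac.poch, one_div] using h4
  have hgeo : Summable fun k : ℕ => q ^ k := summable_geometric_of_lt_one hq.le hq1
  have hPsum : Summable fun k : ℕ => q ^ k * P k ^ 2 := by
    refine Summable.of_nonneg_of_le (fun k => by positivity) (fun k => ?_)
      (hgeo.mul_left (((QFrac.pochInf q (q ^ α))⁻¹) ^ 2))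
    have h1 := hC k
    have h2 := (hPpos k).le
    have hqk : (0:ℝ) ≤ q ^ k := pow_nonneg hq.le k
    have h3 : P k ^ 2 ≤ ((QFrac.pochInf q (q ^ α))⁻¹) ^ 2 := by nlinarith
    nlinarith
  set S := ∑' m : ℕ, q ^ m * f (a * q ^ m) ^ 2 with hSdef
  have hS0 : 0 ≤ S := tsum_nonneg fun m => by positivity
  set Psum := ∑' k : ℕ, q ^ k * P k ^ 2 with hPsumdef
  have hPsum0 : 0 ≤ Psum := tsum_nonneg fun k => by positivity
  set R := a ^ α * (1 - q) / QFrac.qGamma q α * (Real.sqrt Psum * Real.sqrt S) with hRdef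
  have hR0 : 0 ≤ R := by
    apply mul_nonneg (div_nonneg (mul_nonneg (Real.rpow_nonneg ha.le α) hq1'.le) hΓpos.le)
      (mul_nonneg (Real.sqrt_nonneg _) (Real.sqrt_nonneg _))
  have hkey : ∀ n : ℕ, |QFrac.Ileft q α f (a * q ^ n)| ≤ (q ^ (α - 1/2)) ^ n * R := by
    intro n
    have hx : 0 < a * q ^ n := by positivity
    have hqn : (0:ℝ) < q ^ n := by positivity
    have hqn0 : (q:ℝ) ^ n ≠ 0 := ne_of_gt hqn
    have hxne : a * q ^ n ≠ 0 := ne_of_gt hx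
    have hIeq : QFrac.Ileft q α f (a * q ^ n) =
        (a * q ^ n) ^ (α - 1) / QFrac.qGamma q α *
          ((1 - q) * (a * q ^ n) * ∑' k : ℕ, q ^ k * (P k * f (a * q ^ (n + k)))) := by
      simp only [QFrac.Ileft, QFrac.jackson]
      congr 2
      apply tsum_congr
      intro k
      have h1 : q * ((a * q ^ n) * q ^ k) / (a * q ^ n) = q * q ^ k := by
        rw [div_eq_iff hxne]; ring
      have h2 : (a * q ^ n) * q ^ k = a * q ^ (n + k) := by rw [pow_add]; ring
      rw [h1, h2]
    set u : ℕ → ℝ := fun k => Real.sqrt (q ^ k) * P k with hudef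
    set v : ℕ → ℝ := fun k => Real.sqrt (q ^ k) * f (a * q ^ (n + k)) with hvdef
    have hsq : ∀ k : ℕ, Real.sqrt (q ^ k) * Real.sqrt (q ^ k) = q ^ k := fun k =>
      Real.mul_self_sqrt (pow_nonneg hq.le k)
    have huv : ∀ k, q ^ k * (P k * f (a * q ^ (n + k))) = u k * v k := by
      intro k
      have h : u k * v k = (Real.sqrt (q ^ k) * Real.sqrt (q ^ k)) *
          (P k * f (a * q ^ (n + k))) := by
        simp only [hudef, hvdef]; ring
      rw [h, hsq k]
    have hu2 : (fun k => u k ^ 2) = fun k => q ^ k * P k ^ 2 := by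
      funext k
      simp only [hudef, mul_pow, Real.sq_sqrt (pow_nonneg hq.le k)]
    have hv2 : (fun k => v k ^ 2) = fun k => q ^ k * f (a * q ^ (n + k)) ^ 2 := by
      funext k
      simp only [hvdef, mul_pow, Real.sq_sqrt (pow_nonneg hq.le k)]
    have hshift : Summable fun k : ℕ => q ^ (n + k) * f (a * q ^ (n + k)) ^ 2 := by
      have h := hf'.comp_injective (add_right_injective n)
      exact h
    have hv2sum : Summable fun k => v k ^ 2 := by
      rw [hv2]
      have he : (fun k : ℕ => q ^ k * f (a * q ^ (n + k)) ^ 2)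
          = fun k => (q ^ n)⁻¹ * (q ^ (n + k) * f (a * q ^ (n + k)) ^ 2) := by
        funext k; rw [pow_add]; field_simp
      rw [he]
      exact hshift.mul_left _
    have hu2sum : Summable fun k => u k ^ 2 := by rw [hu2]; exact hPsum
    obtain ⟨hsabs, hcs⟩ := aux_cs u v hu2sum hv2sum
    have htail : ∑' k, v k ^ 2 ≤ (q ^ n)⁻¹ * S := by
      have h1 : ∑' k, v k ^ 2 = (q ^ n)⁻¹ * ∑' k, q ^ (n + k) * f (a * q ^ (n + k)) ^ 2 := by
        rw [hv2, ← tsum_mul_left]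
        apply tsum_congr; intro k; rw [pow_add]; field_simp
      rw [h1]
      have h2 : ∑' k, q ^ (n + k) * f (a * q ^ (n + k)) ^ 2 ≤ S := by
        refine Summable.tsum_le_tsum_of_inj (fun k => n + k) (add_right_injective n)
          (fun m _ => by positivity) (fun k => le_rfl) hshift hf'
      exact mul_le_mul_of_nonneg_left h2 (by positivity)
    have hT : |∑' k : ℕ, q ^ k * (P k * f (a * q ^ (n + k)))| ≤
        Real.sqrt Psum * Real.sqrt ((q ^ n)⁻¹ * S) := by
      calc |∑' k : ℕ, q ^ k * (P k * f (a * q ^ (n + k)))| = |∑' k : ℕ, u k * v k| := by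
            rw [tsum_congr huv]
        _ ≤ ∑' k, |u k * v k| := by
            have h := norm_tsum_le_tsum_norm (f := fun k : ℕ => u k * v k)
              (by simpa only [Real.norm_eq_abs] using hsabs)
            simpa only [Real.norm_eq_abs] using h
        _ ≤ Real.sqrt (∑' k, u k ^ 2) * Real.sqrt (∑' k, v k ^ 2) := hcs
        _ ≤ Real.sqrt Psum * Real.sqrt ((q ^ n)⁻¹ * S) := by
            rw [show ∑' k, u k ^ 2 = Psum by rw [hu2]]
            exact mul_le_mul_of_nonneg_left (Real.sqrt_le_sqrt htail) (Real.sqrt_nonneg _)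
    rw [hIeq]
    have hc1 : (0:ℝ) ≤ (a * q ^ n) ^ (α - 1) / QFrac.qGamma q α :=
      div_nonneg (Real.rpow_nonneg hx.le _) hΓpos.le
    have hc2 : (0:ℝ) ≤ (1 - q) * (a * q ^ n) := mul_nonneg hq1'.le hx.le
    calc |(a * q ^ n) ^ (α - 1) / QFrac.qGamma q α *
            ((1 - q) * (a * q ^ n) * ∑' k : ℕ, q ^ k * (P k * f (a * q ^ (n + k))))|
        = (a * q ^ n) ^ (α - 1) / QFrac.qGamma q α * ((1 - q) * (a * q ^ n)) *
            |∑' k : ℕ, q ^ k * (P k * f (a * q ^ (n + k)))| := by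
          rw [abs_mul, abs_mul, abs_of_nonneg hc1, abs_of_nonneg hc2]; ring
      _ ≤ (a * q ^ n) ^ (α - 1) / QFrac.qGamma q α * ((1 - q) * (a * q ^ n)) *
            (Real.sqrt Psum * Real.sqrt ((q ^ n)⁻¹ * S)) :=
          mul_le_mul_of_nonneg_left hT (mul_nonneg hc1 hc2)
      _ = (q ^ (α - 1/2)) ^ n * R := by
          have e1 : Real.sqrt ((q ^ n)⁻¹ * S) = (Real.sqrt (q ^ n))⁻¹ * Real.sqrt S := by
            rw [Real.sqrt_mul (by positivity), Real.sqrt_inv]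
          have e2 : (a * q ^ n) ^ (α - 1) * (a * q ^ n) = a ^ α * (q ^ n : ℝ) ^ α := by
            have h : (a * q ^ n) ^ (α - 1) * (a * q ^ n) = (a * q ^ n) ^ α := by
              nth_rewrite 2 [← Real.rpow_one (a * q ^ n)]
              rw [← Real.rpow_add hx]; norm_num
            rw [h]; exact Real.mul_rpow ha.le (by positivity)
          have e5 : ((q ^ n : ℝ)) ^ (α - 1/2) = (q ^ (α - 1/2)) ^ n := by
            rw [← Real.rpow_natCast q n, ← Real.rpow_natCast (q ^ (α - 1/2)) n,
              ← Real.rpow_mul hq.le, ← Real.rpow_mul hq.le]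
            congr 1; ring
          have e3 : (q ^ n : ℝ) ^ α * (Real.sqrt (q ^ n))⁻¹ = (q ^ (α - 1/2)) ^ n := by
            rw [Real.sqrt_eq_rpow, ← Real.rpow_neg (by positivity), ← Real.rpow_add hqn,
              ← e5, sub_eq_add_neg]
          have key : (a * q ^ n) ^ (α - 1) * (a * q ^ n) * (Real.sqrt (q ^ n))⁻¹
              = (q ^ (α - 1/2)) ^ n * a ^ α := by
            rw [e2, mul_assoc, e3]; ring
          rw [e1, hRdef]
          linear_combination (1 - q) / QFrac.qGamma q α *
            (Real.sqrt Psum * Real.sqrt S) * key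
  have hI0 : QFrac.Ileft q α f 0 = 0 := by
    simp [QFrac.Ileft, QFrac.jackson]
  have hreg : QFrac.qRegular q a (QFrac.Ileft q α f) := by
    unfold QFrac.qRegular
    rw [hI0]
    apply squeeze_zero_norm (fun n => by simpa [Real.norm_eq_abs] using hkey n)
    have h1 : Tendsto (fun n : ℕ => (q ^ (α - 1/2)) ^ n) atTop (nhds 0) :=
      tendsto_pow_atTop_nhds_zero_of_lt_one (Real.rpow_nonneg hq.le _)
        (Real.rpow_lt_one hq.le hq1 (by linarith))
    simpa using h1.mul_const R
  have hcle : ∀ n : ℕ, |QFrac.Ileft q α f (a * q ^ n)| ≤ R := by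
    intro n
    refine (hkey n).trans ?_
    have h : (q ^ (α - 1/2)) ^ n ≤ 1 :=
      pow_le_one₀ (Real.rpow_nonneg hq.le _) (Real.rpow_le_one hq.le hq1.le (by linarith))
    nlinarith
  have hsup : QFrac.supNorm q a (QFrac.Ileft q α f) ≤ R := by
    unfold QFrac.supNorm
    apply max_le (ciSup_le hcle)
    rw [hI0]; simpa using hR0
  refine ⟨hreg, ?_⟩
  have hjack : QFrac.jackson q 1 (fun ξ => QFrac.poch q (q * ξ) (α - 1) ^ 2)
      = (1 - q) * Psum := by
    simp only [QFrac.jackson, one_mul, mul_one]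
    rfl
  have hnorm : QFrac.norm2 q a f = Real.sqrt ((1 - q) * a * S) := by
    simp only [QFrac.norm2, QFrac.jackson]
    rfl
  have hfinal : (a ^ (α - 1 / 2) / QFrac.qGamma q α *
      Real.sqrt (QFrac.jackson q 1 fun ξ => QFrac.poch q (q * ξ) (α - 1) ^ 2)) *
        QFrac.norm2 q a f = R := by
    rw [hjack, hnorm, hRdef]
    rw [Real.sqrt_mul (mul_nonneg hq1'.le ha.le) S, Real.sqrt_mul hq1'.le a,
      Real.sqrt_mul hq1'.le Psum]
    have h1 : Real.sqrt (1 - q) * Real.sqrt (1 - q) = 1 - q := Real.mul_self_sqrt hq1'.le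
    have h2 : a ^ (α - 1/2) * Real.sqrt a = a ^ α := by
      rw [Real.sqrt_eq_rpow, ← Real.rpow_add ha]; congr 1; ring
    linear_combination (Real.sqrt Psum * Real.sqrt S / QFrac.qGamma q α) *
        (a ^ (α - 1/2) * Real.sqrt a) * h1 +
      (Real.sqrt Psum * Real.sqrt S / QFrac.qGamma q α) * (1 - q) * h2
  rw [hfinal]
  exact hsup
end
end
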